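/- (Two-source perfect codes are Hamming codes) Let (H₁, H₂) be surjective F₂-matrices with n columns such that the syndrome map is a bijection from the 2-terminal Hamming sources of length n onto its codomain. Then after shifting the null space of H₁ into H₂ (yielding an equivalent perfect code (H′₁, H′₂) with null H′₁ = {0} and null H′₂ = null H₁ ⊕ null H₂), H′₂ is an m × n matrix with 2^m = n + 1 whose columns are nonzero and pairwise distinct — i.e., a parity check matrix of the Hamming (n, n−m) code, unique up to column permutation. -/

import Mathlib

/-- Hamming weight of a binary vector. -/
def wt {n : ℕ} (v : Fin n → ZMod 2) : ℕ := (Finset.univ.filter fun j => v j ≠ 0).card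

/-- 2-terminal Hamming sources of length `n`: pairs `(b+v₁, b+v₂)` with
`wt(v₁) + wt(v₂) ≤ 1`. -/
def hammingPairs (n : ℕ) : Set ((Fin n → ZMod 2) × (Fin n → ZMod 2)) :=
  {p | ∃ b v₁ v₂ : Fin n → ZMod 2, p.1 = b + v₁ ∧ p.2 = b + v₂ ∧ wt v₁ + wt v₂ ≤ 1}


lemma wt_zero (n : ℕ) : wt (0 : Fin n → ZMod 2) = 0 := by simp [wt]

lemma zmod2_add_self {n : ℕ} (v : Fin n → ZMod 2) : v + v = 0 := by
  funext i; exact CharTwo.add_self_eq_zero _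

lemma wt_single {n : ℕ} (j : Fin n) : wt (Pi.single j (1 : ZMod 2)) = 1 := by
  have : (Finset.univ.filter fun i : Fin n => (Pi.single j (1:ZMod 2) : Fin n → ZMod 2) i ≠ 0) = {j} := by
    ext i
    simp only [Finset.mem_filter, Finset.mem_univ, true_and, Finset.mem_singleton,
      Pi.single_apply]
    constructor
    · intro h; by_contra hne; simp [hne] at h
    · intro h; simp [h]
  simp [wt, this]

lemma wt_add_le {n : ℕ} (a b : Fin n → ZMod 2) : wt (a + b) ≤ wt a + wt b := by
  classical
  have hsub : (Finset.univ.filter fun i => (a + b) i ≠ 0) ⊆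
      (Finset.univ.filter fun i => a i ≠ 0) ∪ (Finset.univ.filter fun i => b i ≠ 0) := by
    intro i hi
    simp only [Finset.mem_filter, Finset.mem_univ, true_and, Finset.mem_union] at *
    by_contra h
    push_neg at h
    simp [Pi.add_apply, h.1, h.2] at hi
  calc wt (a+b) ≤ _ := Finset.card_le_card hsub
    _ ≤ wt a + wt b := Finset.card_union_le _ _

lemma card_wt_le_one (n : ℕ) :
    (Finset.univ.filter fun v : Fin n → ZMod 2 => wt v ≤ 1).card = n + 1 := by
  have h01 : ∀ a : ZMod 2, a ≠ 0 → a = 1 := by decide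
  have hset : (Finset.univ.filter fun v : Fin n → ZMod 2 => wt v ≤ 1)
      = insert 0 (Finset.univ.image fun j : Fin n => Pi.single j (1 : ZMod 2)) := by
    ext v
    simp only [Finset.mem_filter, Finset.mem_univ, true_and, Finset.mem_insert,
      Finset.mem_image]
    constructor
    · intro hv
      by_cases h0 : v = 0
      · exact Or.inl h0
      · right
        obtain ⟨j, hj⟩ : ∃ j, v j ≠ 0 := by
          by_contra h; push_neg at h; exact h0 (funext fun i => h i)
        refine ⟨j, ?_⟩
        have huniq : ∀ i, v i ≠ 0 → i = j := fun i hi =>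
          Finset.card_le_one.mp hv i (by simp [hi]) j (by simp [hj])
        symm; funext i
        by_cases hij : i = j
        · subst hij; simp [Pi.single_eq_same, h01 _ hj]
        · have : v i = 0 := by by_contra h; exact hij (huniq i h)
          simp [Pi.single_apply, hij, this]
    · rintro (rfl | ⟨j, rfl⟩)
      · simp [wt_zero]
      · simp [wt_single]
  rw [hset, Finset.card_insert_of_notMem, Finset.card_image_of_injective]
  · simp
  · intro j k h
    by_contra hne
    have := congrFun h j
    simp [Pi.single_eq_same, Pi.single_apply, hne] at this
  · intro h
    simp only [Finset.mem_image, Finset.mem_univ, true_and] at h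
    obtain ⟨j, hj⟩ := h
    have := congrFun hj j
    simp [Pi.single_eq_same] at this

lemma mem_hammingPairs_iff {n : ℕ} (p : (Fin n → ZMod 2) × (Fin n → ZMod 2)) :
    p ∈ hammingPairs n ↔ wt (p.1 + p.2) ≤ 1 := by
  constructor
  · rintro ⟨b, v₁, v₂, h1, h2, hw⟩
    have : p.1 + p.2 = v₁ + v₂ := by
      rw [h1, h2]
      have : b + v₁ + (b + v₂) = (b + b) + (v₁ + v₂) := by ring
      rw [this, zmod2_add_self, zero_add]
    rw [this]
    exact le_trans (wt_add_le _ _) hw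
  · intro h
    refine ⟨p.2, p.1 + p.2, 0, ?_, by simp, by simpa [wt_zero] using h⟩
    have : p.2 + (p.1 + p.2) = p.1 + (p.2 + p.2) := by ring
    rw [this, zmod2_add_self, add_zero]

lemma hammingPairs_eq (n : ℕ) : hammingPairs n =
    ↑((Finset.univ : Finset ((Fin n → ZMod 2) × (Fin n → ZMod 2))).filter
      fun p => wt (p.1 + p.2) ≤ 1) := by
  ext p
  simp [mem_hammingPairs_iff]

lemma card_hp (n : ℕ) :
    ((Finset.univ : Finset ((Fin n → ZMod 2) × (Fin n → ZMod 2))).filter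
      fun p => wt (p.1 + p.2) ≤ 1).card = 2 ^ n * (n + 1) := by
  classical
  rw [Finset.card_bij' (t := Finset.univ ×ˢ (Finset.univ.filter fun v : Fin n → ZMod 2 => wt v ≤ 1))
    (i := fun q _ => (q.1, q.1 + q.2)) (j := fun q _ => (q.1, q.1 + q.2))]
  · rw [Finset.card_product, card_wt_le_one]
    simp [Fintype.card_fun]
  · intro q hq
    simp only [Finset.mem_filter, Finset.mem_univ, true_and] at hq
    simp [Finset.mem_product, hq]
  · intro q hq
    simp only [Finset.mem_product, Finset.mem_filter, Finset.mem_univ, true_and] at hq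
    simp only [Finset.mem_filter, Finset.mem_univ, true_and]
    have : q.1 + (q.1 + q.2) = q.2 := by
      rw [← add_assoc, zmod2_add_self, zero_add]
    rw [this]; exact hq
  · intro q hq
    ext <;> simp [← add_assoc, zmod2_add_self, CharTwo.add_self_eq_zero]
  · intro q hq
    ext <;> simp [← add_assoc, zmod2_add_self, CharTwo.add_self_eq_zero]

/-- (Two-source perfect codes are Hamming codes) Let `(H₁, H₂)` be surjective
`F₂`-matrices with `n` columns whose syndrome map is a bijection from the 2-terminal
Hamming sources of length `n` onto its codomain.  Then any surjective `m × n` matrix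
`H₂'` with `null H₂' = null H₁ ⊔ null H₂` (the shifted second coding matrix) satisfies
`2^m = n + 1` and has nonzero, pairwise distinct columns — i.e., it is a parity check
matrix of the Hamming `(n, n−m)` code, unique up to column permutation. -/
theorem stmt_16 (n m₁ m₂ : ℕ)
    (H₁ : Matrix (Fin m₁) (Fin n) (ZMod 2)) (H₂ : Matrix (Fin m₂) (Fin n) (ZMod 2))
    (hs₁ : Function.Surjective H₁.mulVec) (hs₂ : Function.Surjective H₂.mulVec)
    (hperf : Set.BijOn
      (fun p : (Fin n → ZMod 2) × (Fin n → ZMod 2) => (H₁.mulVec p.1, H₂.mulVec p.2))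
      (hammingPairs n) Set.univ)
    (m : ℕ) (H₂' : Matrix (Fin m) (Fin n) (ZMod 2))
    (hker : LinearMap.ker H₂'.mulVecLin =
      LinearMap.ker H₁.mulVecLin ⊔ LinearMap.ker H₂.mulVecLin)
    (hsurj : Function.Surjective H₂'.mulVec) :
    2 ^ m = n + 1 ∧ (∀ j, (fun r => H₂' r j) ≠ 0) ∧
      Function.Injective (fun j => fun r => H₂' r j) := by
  classical
  -- membership helpers
  have mem_diag : ∀ b : Fin n → ZMod 2, (b, b) ∈ hammingPairs n := fun b =>
    ⟨b, 0, 0, by simp, by simp, by simp [wt_zero]⟩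
  have mem_left : ∀ (b : Fin n → ZMod 2) (j : Fin n),
      (b + Pi.single j 1, b) ∈ hammingPairs n := fun b j =>
    ⟨b, Pi.single j 1, 0, rfl, by simp, by simp [wt_zero, wt_single]⟩
  have mem_right : ∀ (b : Fin n → ZMod 2) (j : Fin n),
      (b, b + Pi.single j 1) ∈ hammingPairs n := fun b j =>
    ⟨b, 0, Pi.single j 1, by simp, rfl, by simp [wt_zero, wt_single]⟩
  -- key: any weight ≤ something vector in the kernel of H₂' decomposes
  have hdecomp : ∀ w : Fin n → ZMod 2, H₂'.mulVec w = 0 →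
      ∃ u₁ u₂, H₁.mulVec u₁ = 0 ∧ H₂.mulVec u₂ = 0 ∧ u₁ + u₂ = w := by
    intro w hw
    have : w ∈ LinearMap.ker H₂'.mulVecLin := by
      simpa [Matrix.mulVecLin_apply] using hw
    rw [hker] at this
    obtain ⟨u₁, hu₁, u₂, hu₂, hsum⟩ := Submodule.mem_sup.mp this
    exact ⟨u₁, u₂, by simpa [Matrix.mulVecLin_apply] using hu₁,
      by simpa [Matrix.mulVecLin_apply] using hu₂, hsum⟩
  -- columns nonzero
  have hnz : ∀ j, (fun r => H₂' r j) ≠ 0 := by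
    intro j hcol
    have hwker : H₂'.mulVec (Pi.single j 1) = 0 := by
      rw [Matrix.mulVec_single]
      simp only [MulOpposite.op_one, one_smul]
      exact hcol
    obtain ⟨u₁, u₂, hu₁, hu₂, hsum⟩ := hdecomp _ hwker
    have hu2 : u₂ = u₁ + Pi.single j 1 := by
      rw [← hsum, ← add_assoc, zmod2_add_self, zero_add]
    have heq : (fun p : (Fin n → ZMod 2) × (Fin n → ZMod 2) =>
        (H₁.mulVec p.1, H₂.mulVec p.2)) ((0 : Fin n → ZMod 2) + Pi.single j 1, 0)
        = (fun p : (Fin n → ZMod 2) × (Fin n → ZMod 2) =>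
        (H₁.mulVec p.1, H₂.mulVec p.2)) (u₂, u₂) := by
      have h1 : H₁.mulVec u₂ = H₁.mulVec (Pi.single j 1) := by
        rw [hu2, Matrix.mulVec_add, hu₁, zero_add]
      simp [h1, hu₂, Matrix.mulVec_zero]
    have := hperf.injOn (mem_left 0 j) (mem_diag u₂) heq
    have h2 : u₂ = 0 := (congrArg Prod.snd this).symm
    have h1 : (0 : Fin n → ZMod 2) + Pi.single j 1 = u₂ := congrArg Prod.fst this
    rw [h2, zero_add] at h1
    have := congrFun h1 j
    simp [Pi.single_eq_same] at this
  -- columns pairwise distinct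
  have hinj : Function.Injective (fun j => fun r => H₂' r j) := by
    intro j k hjk
    by_contra hne
    simp only at hjk
    have hwker : H₂'.mulVec (Pi.single j 1 + Pi.single k 1) = 0 := by
      rw [Matrix.mulVec_add, Matrix.mulVec_single, Matrix.mulVec_single]
      funext r
      have := congrFun hjk r
      simp only [Pi.add_apply, Pi.zero_apply, mul_one]
      simp only [Matrix.col, MulOpposite.op_one, one_smul, Matrix.transpose_apply]
      rw [this]
      exact CharTwo.add_self_eq_zero _
    obtain ⟨u₁, u₂, hu₁, hu₂, hsum⟩ := hdecomp _ hwker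
    have hu2 : u₂ = u₁ + (Pi.single j 1 + Pi.single k 1) := by
      rw [← hsum, ← add_assoc, zmod2_add_self, zero_add]
    -- q.2 = (single j 1 + u₁) + single k 1 = u₂
    have hq2 : (Pi.single j 1 + u₁ : Fin n → ZMod 2) + Pi.single k 1 = u₂ := by
      rw [hu2]; ring
    have heq : (fun p : (Fin n → ZMod 2) × (Fin n → ZMod 2) =>
        (H₁.mulVec p.1, H₂.mulVec p.2)) ((0 : Fin n → ZMod 2) + Pi.single j 1, 0)
        = (fun p : (Fin n → ZMod 2) × (Fin n → ZMod 2) =>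
        (H₁.mulVec p.1, H₂.mulVec p.2)) (Pi.single j 1 + u₁, (Pi.single j 1 + u₁) + Pi.single k 1) := by
      have h1 : H₁.mulVec (Pi.single j 1 + u₁) = H₁.mulVec (Pi.single j 1) := by
        rw [Matrix.mulVec_add, hu₁, add_zero]
      have h2 : H₂.mulVec ((Pi.single j 1 + u₁) + Pi.single k 1) = 0 := by
        rw [hq2]; exact hu₂
      simp [h1, h2, Matrix.mulVec_zero]
    have hpq := hperf.injOn (mem_left 0 j) (mem_right (Pi.single j 1 + u₁) k) heq
    have h2 : (0 : Fin n → ZMod 2) = (Pi.single j 1 + u₁) + Pi.single k 1 :=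
      congrArg Prod.snd hpq
    have h1 : (0 : Fin n → ZMod 2) + Pi.single j 1 = Pi.single j 1 + u₁ :=
      congrArg Prod.fst hpq
    rw [zero_add] at h1
    have hu1 : u₁ = 0 := by
      have := congrArg (fun x => (Pi.single j 1 : Fin n → ZMod 2) + x) h1
      simpa [← add_assoc, zmod2_add_self] using this.symm
    rw [hu1, add_zero] at h2
    have := congrFun h2 j
    simp [Pi.single_eq_same, Pi.single_eq_of_ne hne] at this
  -- cardinality
  have hcard : 2 ^ n * (n + 1) = 2 ^ m₁ * 2 ^ m₂ := by
    have e := hperf.equiv _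
    have hc := Nat.card_congr e
    rw [hammingPairs_eq n] at hc
    rw [Nat.card_coe_set_eq, Set.ncard_coe_finset, card_hp] at hc
    rw [hc, Nat.card_coe_set_eq, Set.ncard_univ, Nat.card_eq_fintype_card]
    simp [Fintype.card_fun]
  -- ranks
  have hrank : ∀ (k : ℕ) (H : Matrix (Fin k) (Fin n) (ZMod 2)),
      Function.Surjective H.mulVec →
      Module.finrank (ZMod 2) (LinearMap.ker H.mulVecLin) + k = n := by
    intro k H hs
    have hr : LinearMap.range H.mulVecLin = ⊤ := by
      rw [LinearMap.range_eq_top]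
      intro y; obtain ⟨x, hx⟩ := hs y; exact ⟨x, by simpa [Matrix.mulVecLin_apply] using hx⟩
    have := LinearMap.finrank_range_add_finrank_ker H.mulVecLin
    rw [hr, finrank_top, Module.finrank_fin_fun, Module.finrank_fin_fun] at this
    omega
  have hk1 := hrank m₁ H₁ hs₁
  have hk2 := hrank m₂ H₂ hs₂
  have hk' := hrank m H₂' hsurj
  -- trivial intersection
  have hint : LinearMap.ker H₁.mulVecLin ⊓ LinearMap.ker H₂.mulVecLin = ⊥ := by
    rw [eq_bot_iff]
    rintro w ⟨hw1, hw2⟩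
    simp only [SetLike.mem_coe, LinearMap.mem_ker, Matrix.mulVecLin_apply] at hw1 hw2
    have heq : (fun p : (Fin n → ZMod 2) × (Fin n → ZMod 2) =>
        (H₁.mulVec p.1, H₂.mulVec p.2)) (w, w)
        = (fun p : (Fin n → ZMod 2) × (Fin n → ZMod 2) =>
        (H₁.mulVec p.1, H₂.mulVec p.2)) (0, 0) := by
      simp [hw1, hw2, Matrix.mulVec_zero]
    have := hperf.injOn (mem_diag w) (mem_diag 0) heq
    have : w = 0 := congrArg Prod.fst this
    simp [this]
  have hdim := Submodule.finrank_sup_add_finrank_inf_eq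
    (LinearMap.ker H₁.mulVecLin) (LinearMap.ker H₂.mulVecLin)
  rw [hint, finrank_bot, ← hker] at hdim
  -- arithmetic
  have hm : m₁ + m₂ = n + m := by omega
  have h2 : 2 ^ n * (n + 1) = 2 ^ n * 2 ^ m := by
    rw [hcard, ← pow_add, hm, pow_add]
  have := Nat.eq_of_mul_eq_mul_left (Nat.pow_pos (n := n) (by norm_num)) h2
  exact ⟨this.symm, hnz, hinj⟩
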